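/- Let q = 1/2 and let p ∈ Δ_2 with p_1 > p_2. Then G^n(p) converges to (p_1 − p_2, 0, 1 − p_1 + p_2) as n → ∞. -/
import Mathlib


open Filter Topology

/-- The map G = (G₁,G₂,G₃) on ℝ³ (with parameter q):
G₁(x) = x₁² + 2q x₁ x₃, G₂(x) = x₂² + 2q x₂ x₃,
G₃(x) = x₃² + 2 x₁ x₂ + 2(1−q) x₁ x₃ + 2(1−q) x₂ x₃. -/
noncomputable def Gmap (q : ℝ) (x : ℝ × ℝ × ℝ) : ℝ × ℝ × ℝ :=
  (x.1 ^ 2 + 2 * q * x.1 * x.2.2,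
   x.2.1 ^ 2 + 2 * q * x.2.1 * x.2.2,
   x.2.2 ^ 2 + 2 * x.1 * x.2.1 + 2 * (1 - q) * x.1 * x.2.2
     + 2 * (1 - q) * x.2.1 * x.2.2)

/-- The open simplex Δ₂ ⊆ ℝ³. -/
def simplex2 : Set (ℝ × ℝ × ℝ) :=
  {p | p.1 + p.2.1 + p.2.2 = 1 ∧ 0 < p.1 ∧ 0 < p.2.1 ∧ 0 < p.2.2}

lemma gmap_step (x : ℝ × ℝ × ℝ) (hx : x ∈ simplex2) (d : ℝ) (hd : 0 < d)
    (hdiff : x.1 - x.2.1 = d) :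
    Gmap (1/2) x ∈ simplex2 ∧ (Gmap (1/2) x).1 - (Gmap (1/2) x).2.1 = d ∧
      (Gmap (1/2) x).2.1 ≤ x.2.1 * (1 - d) := by
  obtain ⟨hs, ha, hb, hc⟩ := hx
  have hb1 : x.2.1 < 1 := by linarith
  have ha1 : x.1 < 1 := by linarith
  refine ⟨⟨by simp only [Gmap]; ring_nf; nlinarith [sq_nonneg (x.1 + x.2.1 + x.2.2)],
      by simp only [Gmap]; nlinarith, by simp only [Gmap]; nlinarith,
      by simp only [Gmap]; nlinarith⟩, ?_, ?_⟩
  · simp only [Gmap]; nlinarith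
  · simp only [Gmap]; nlinarith

/-- If q = 1/2 and p₁ > p₂, then G^n(p) → (p₁ − p₂, 0, 1 − p₁ + p₂). -/
theorem tendsto_critical_first (p : ℝ × ℝ × ℝ) (hp : p ∈ simplex2)
    (h12 : p.2.1 < p.1) :
    Tendsto (fun n => (Gmap (1 / 2))^[n] p) atTop
      (𝓝 (p.1 - p.2.1, (0 : ℝ), 1 - p.1 + p.2.1)) := by
  set d := p.1 - p.2.1 with hdd
  have hd : 0 < d := by linarith
  obtain ⟨hs, ha, hb, hc⟩ := hp
  have hd1 : d < 1 := by simp only [hdd]; linarith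
  have key : ∀ n, (Gmap (1/2))^[n] p ∈ simplex2 ∧
      ((Gmap (1/2))^[n] p).1 - ((Gmap (1/2))^[n] p).2.1 = d ∧
      ((Gmap (1/2))^[n] p).2.1 ≤ p.2.1 * (1 - d)^n := by
    intro n
    induction n with
    | zero => exact ⟨⟨hs, ha, hb, hc⟩, rfl, by simp⟩
    | succ n ih =>
      obtain ⟨hmem, hdiff, hle⟩ := ih
      rw [Function.iterate_succ_apply']
      obtain ⟨h1, h2, h3⟩ := gmap_step _ hmem d hd hdiff
      refine ⟨h1, h2, ?_⟩
      calc (Gmap (1/2) ((Gmap (1/2))^[n] p)).2.1 ≤ ((Gmap (1/2))^[n] p).2.1 * (1 - d) := h3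
        _ ≤ p.2.1 * (1 - d)^n * (1 - d) := by
            apply mul_le_mul_of_nonneg_right hle (by linarith)
        _ = p.2.1 * (1 - d)^(n+1) := by ring
  have hbto : Tendsto (fun n => ((Gmap (1/2))^[n] p).2.1) atTop (𝓝 0) := by
    have h0 : Tendsto (fun n : ℕ => p.2.1 * (1 - d)^n) atTop (𝓝 0) := by
      have := tendsto_pow_atTop_nhds_zero_of_lt_one (by linarith : (0:ℝ) ≤ 1 - d)
        (by linarith : (1:ℝ) - d < 1)
      simpa using this.const_mul p.2.1
    refine squeeze_zero (fun n => (key n).1.2.2.1.le) (fun n => (key n).2.2) h0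
  have hato : Tendsto (fun n => ((Gmap (1/2))^[n] p).1) atTop (𝓝 d) := by
    have : (fun n => ((Gmap (1/2))^[n] p).1) = fun n => ((Gmap (1/2))^[n] p).2.1 + d := by
      funext n; have := (key n).2.1; linarith
    rw [this]
    simpa using hbto.add_const d
  have hcto : Tendsto (fun n => ((Gmap (1/2))^[n] p).2.2) atTop (𝓝 (1 - d)) := by
    have heq : (fun n => ((Gmap (1/2))^[n] p).2.2) =
        fun n => 1 - ((Gmap (1/2))^[n] p).1 - ((Gmap (1/2))^[n] p).2.1 := by
      funext n; have := (key n).1.1; linarith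
    rw [heq]
    have := (hato.const_sub 1).sub hbto
    simpa using this
  have : Tendsto (fun n => (((Gmap (1/2))^[n] p).1, ((Gmap (1/2))^[n] p).2.1,
      ((Gmap (1/2))^[n] p).2.2)) atTop (𝓝 (d, (0:ℝ), 1 - d)) :=
    hato.prodMk_nhds (hbto.prodMk_nhds hcto)
  have hde : (d, (0:ℝ), 1 - d) = (p.1 - p.2.1, (0:ℝ), 1 - p.1 + p.2.1) := by
    simp only [hdd]; ring_nf
  rw [← hde]
  exact this
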